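/- For every g ∈ 𝒞 and all t ∈ [0,1], one has (Tg)(g(t)) · ∫₀¹ g = ∫₀ᵗ g(x) dx − t·g(t). -/

import Mathlib

open Set MeasureTheory Filter intervalIntegral

noncomputable section

/-- The class ℰ of decreasing functions `f : [0,1] → [0,1]` with `f 0 = 1` and positive area. -/
def MemE (f : ℝ → ℝ) : Prop :=
  (∀ x ∈ Icc (0:ℝ) 1, f x ∈ Icc (0:ℝ) 1) ∧
  AntitoneOn f (Icc 0 1) ∧ f 0 = 1 ∧ 0 < ∫ x in (0:ℝ)..1, f x

/-- Pseudo-inverse: `f* y = sup {x ∈ [0,1] | f x ≥ y}`. -/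
def pseudoInv (f : ℝ → ℝ) (y : ℝ) : ℝ :=
  sSup {x | x ∈ Icc (0:ℝ) 1 ∧ y ≤ f x}

/-- The operator `T`: `(Tf)(x) = (∫ₓ¹ f*) / (∫₀¹ f)`. -/
def Tmap (f : ℝ → ℝ) : ℝ → ℝ :=
  fun x => (∫ y in x..1, pseudoInv f y) / ∫ t in (0:ℝ)..1, f t

/-- The operator `I`: `(Ig)(x) = (∫ₓ¹ g) / (∫₀¹ g)`. -/
def Imap (g : ℝ → ℝ) : ℝ → ℝ :=
  fun x => (∫ t in x..1, g t) / ∫ t in (0:ℝ)..1, g t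

/-- The class 𝒞: continuous members of ℰ vanishing at 1. -/
def MemC (f : ℝ → ℝ) : Prop := MemE f ∧ ContinuousOn f (Icc 0 1) ∧ f 1 = 0

/-- The class 𝒞̆: convex members of 𝒞. -/
def MemCconv (f : ℝ → ℝ) : Prop := MemC f ∧ ConvexOn ℝ (Icc 0 1) f

/-- The class 𝒟: strictly decreasing members of 𝒞. -/
def MemD (f : ℝ → ℝ) : Prop := MemC f ∧ StrictAntiOn f (Icc 0 1)

/-- The class 𝒟̆ = 𝒟 ∩ 𝒞̆. -/
def MemDconv (f : ℝ → ℝ) : Prop := MemD f ∧ ConvexOn ℝ (Icc 0 1) f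

/-- The stride `σ g = sup {α ≥ 0 | α - x ≤ α * g x for all x ∈ [0,1]}`. -/
def stride (g : ℝ → ℝ) : ℝ :=
  sSup {α : ℝ | 0 ≤ α ∧ ∀ x ∈ Icc (0:ℝ) 1, α - x ≤ α * g x}

/-- The class 𝒦. -/
def MemK (g : ℝ → ℝ) : Prop :=
  MemCconv g ∧ 1/5 ≤ stride g ∧ 1/5 ≤ ∫ x in (0:ℝ)..1, g x

/-- `[c,d] ⊆ [0,ℓ]` is a sign switch of `Δ`. -/
def SignSwitch (Δ : ℝ → ℝ) (ℓ c d : ℝ) : Prop :=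
  0 < c ∧ c ≤ d ∧ d < ℓ ∧ (∀ x ∈ Icc c d, Δ x = 0) ∧
  ∃ δ : ℝ, 0 < δ ∧ δ ≤ min c (ℓ - d) ∧
    ∀ x : ℝ, 0 < x → x ≤ δ → Δ (c - x) * Δ (d + x) < 0

/-- `χΔ`: the number of sign switches of `Δ` on `[0,ℓ]`, in `ℕ∞`. -/
def nSwitch (Δ : ℝ → ℝ) (ℓ : ℝ) : ℕ∞ :=
  {p : ℝ × ℝ | SignSwitch Δ ℓ p.1 p.2}.encard

/-- The crossing number `χ(f,g) = sup {χ(f(a·) - b g) : a, b > 0}`. -/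
def crossNum (f g : ℝ → ℝ) : ℕ∞ :=
  ⨆ a ∈ Set.Ioi (0:ℝ), ⨆ b ∈ Set.Ioi (0:ℝ),
    nSwitch (fun x => f (a * x) - b * g x) (min 1 (1/a))

/-- `Dominates f g` means `f` dominates `g`, written `g ◁ f`. -/
def Dominates (f g : ℝ → ℝ) : Prop :=
  crossNum f g = 2 ∧ ∀ x ∈ Icc (0:ℝ) 1, g x ≤ f x

/-- for `g ∈ 𝒞` and `t ∈ [0,1]`,
`(Tg)(g t) · ∫₀¹ g = ∫₀ᵗ g - t·g t`. -/
lemma S_closed {g : ℝ → ℝ} (hcont : ContinuousOn g (Icc 0 1)) (y : ℝ) :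
    IsClosed {x | x ∈ Icc (0:ℝ) 1 ∧ y ≤ g x} := by
  have : {x | x ∈ Icc (0:ℝ) 1 ∧ y ≤ g x} = Icc (0:ℝ) 1 ∩ g ⁻¹' (Ici y) := by
    ext x; simp [mem_preimage, mem_Ici, and_comm]
  rw [this]
  exact hcont.preimage_isClosed_of_isClosed isClosed_Icc isClosed_Ici

lemma pseudoInv_mem {g : ℝ → ℝ} (hcont : ContinuousOn g (Icc 0 1)) (hg0 : g 0 = 1)
    {y : ℝ} (hy : y ≤ 1) :
    pseudoInv g y ∈ {x | x ∈ Icc (0:ℝ) 1 ∧ y ≤ g x} := by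
  apply (S_closed hcont y).csSup_mem
  · exact ⟨0, ⟨le_refl 0, zero_le_one⟩, by rw [hg0]; exact hy⟩
  · exact (bddAbove_Icc (a := (0:ℝ)) (b := 1)).mono (fun x hx => hx.1)

lemma S_eq {g : ℝ → ℝ} (hcont : ContinuousOn g (Icc 0 1)) (hg0 : g 0 = 1)
    (hanti : AntitoneOn g (Icc 0 1)) {y : ℝ} (hy : y ≤ 1) :
    {x | x ∈ Icc (0:ℝ) 1 ∧ y ≤ g x} = Icc 0 (pseudoInv g y) := by
  have hmem := pseudoInv_mem hcont hg0 hy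
  ext x
  constructor
  · intro hx
    exact ⟨hx.1.1, le_csSup ((bddAbove_Icc (a := (0:ℝ)) (b := 1)).mono
      (fun z hz => hz.1)) hx⟩
  · intro hx
    have hx1 : x ∈ Icc (0:ℝ) 1 := ⟨hx.1, hx.2.trans hmem.1.2⟩
    exact ⟨hx1, hmem.2.trans (hanti hx1 hmem.1 hx.2)⟩

theorem stmt6 (g : ℝ → ℝ) (hg : MemC g) :
    ∀ t ∈ Icc (0:ℝ) 1,
      Tmap g (g t) * (∫ x in (0:ℝ)..1, g x) = (∫ x in (0:ℝ)..t, g x) - t * g t := by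
  obtain ⟨⟨hval, hanti, hg0, hpos⟩, hcont, hg1⟩ := hg
  intro t ht
  set s := g t with hs
  have hsmem : s ∈ Icc (0:ℝ) 1 := hval t ht
  -- key identity: ∫ y in s..1, pseudoInv g y = ∫ 0..t g - t*s
  have key : (∫ y in s..1, pseudoInv g y) = (∫ x in (0:ℝ)..t, g x) - t * s := by
    set μ := volume.restrict (Icc (0:ℝ) t) with hμ
    set f : ℝ → ℝ := fun x => g x - s with hf
    have hsubIcc : Icc (0:ℝ) t ⊆ Icc (0:ℝ) 1 := Icc_subset_Icc_right ht.2
    have hcont' : ContinuousOn f (Icc 0 t) :=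
      (hcont.mono hsubIcc).sub continuousOn_const
    have f_intble : Integrable f μ := hcont'.integrableOn_Icc
    have f_nn : 0 ≤ᵐ[μ] f := by
      apply ae_restrict_of_forall_mem measurableSet_Icc
      intro x hx
      have : g t ≤ g x := hanti (hsubIcc hx) ht hx.2
      simpa [hf] using this
    have f_bdd : f ≤ᵐ[μ] (fun _ => 1 - s) := by
      apply ae_restrict_of_forall_mem measurableSet_Icc
      intro x hx
      have : g x ≤ 1 := (hval x (hsubIcc hx)).2
      simpa [hf] using this
    have layer := f_intble.integral_eq_integral_Ioc_meas_le f_nn f_bdd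
    -- LHS of layer
    have lhs_eq : (∫ ω, f ω ∂μ) = (∫ x in (0:ℝ)..t, g x) - t * s := by
      rw [hμ, integral_Icc_eq_integral_Ioc, ← intervalIntegral.integral_of_le ht.1]
      have : (∫ x in (0:ℝ)..t, f x) = (∫ x in (0:ℝ)..t, g x) - ∫ x in (0:ℝ)..t, (s:ℝ) := by
        apply intervalIntegral.integral_sub
        · exact (hcont.mono hsubIcc).intervalIntegrable_of_Icc ht.1
        · exact intervalIntegrable_const
      rw [this, intervalIntegral.integral_const, smul_eq_mul]
      ring
    -- RHS of layer: pointwise identification of the measure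
    have rhs_eq : (∫ y in Ioc 0 (1 - s), ENNReal.toReal (μ {a | y ≤ f a}))
        = ∫ y in s..1, pseudoInv g y := by
      have hcongr : ∀ y ∈ Ioc (0:ℝ) (1 - s),
          ENNReal.toReal (μ {a | y ≤ f a}) = pseudoInv g (s + y) := by
        intro y hy
        have hsy1 : s + y ≤ 1 := by linarith [hy.2]
        have hSeq := S_eq hcont hg0 hanti hsy1
        have hmem := pseudoInv_mem hcont hg0 hsy1
        have hle_t : pseudoInv g (s + y) ≤ t := by
          by_contra hlt
          push_neg at hlt
          have h1 : g (pseudoInv g (s + y)) ≤ g t := hanti ht hmem.1 hlt.le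
          have := hmem.2
          linarith [hy.1]
        have hset : {a | y ≤ f a} ∩ Icc 0 t = Icc 0 (pseudoInv g (s + y)) := by
          ext x
          constructor
          · intro ⟨hx1, hx2⟩
            have : x ∈ {x | x ∈ Icc (0:ℝ) 1 ∧ s + y ≤ g x} := by
              refine ⟨hsubIcc hx2, ?_⟩
              simp only [hf, mem_setOf_eq] at hx1
              linarith
            rw [hSeq] at this; exact this
          · intro hx
            have hxS : x ∈ {x | x ∈ Icc (0:ℝ) 1 ∧ s + y ≤ g x} := by rw [hSeq]; exact hx
            refine ⟨?_, ⟨hx.1, hx.2.trans hle_t⟩⟩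
            simp only [hf, mem_setOf_eq]
            linarith [hxS.2]
        rw [hμ, Measure.restrict_apply' measurableSet_Icc, hset, Real.volume_Icc]
        rw [ENNReal.toReal_ofReal (by linarith [hmem.1.1])]
        ring
      rw [setIntegral_congr_fun measurableSet_Ioc hcongr]
      have h0 : (0:ℝ) ≤ 1 - s := by linarith [hsmem.2]
      rw [← intervalIntegral.integral_of_le h0,
        intervalIntegral.integral_comp_add_left (fun y => pseudoInv g y) s]
      norm_num
    rw [layer] at lhs_eq
    change (∫ y in Ioc 0 (1 - s), ENNReal.toReal (μ {a | y ≤ f a})) = _ at lhs_eq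
    rw [rhs_eq] at lhs_eq
    linarith [lhs_eq]
  have hTne : (∫ x in (0:ℝ)..1, g x) ≠ 0 := ne_of_gt hpos
  rw [Tmap, div_mul_cancel₀ _ hTne]
  exact key
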